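/- In the ring of formal power series ℚ[[x,y]] in two variables, one has (1−x³)·(1−x²)²·(1−x−yx)²·(Σ_{n,k≥0} dsv(n,k)·xⁿ·y^k) = x⁵·y³·(1−x)². Equivalently, (1−x³)·(1+x)²·(1−x−yx)²·(Σ_{n,k≥0} dsv(n,k)·xⁿ·y^k) = x⁵·y³. -/

import Mathlib

/-- The indices (0-based) of symmetric valleys of a list of naturals. -/
def symValleyIdx (L : List ℕ) : Finset ℕ :=
  (Finset.range L.length).filter (fun i =>
    i + 2 < L.length ∧ L.getD i 0 > L.getD (i+1) 0 ∧ L.getD i 0 = L.getD (i+2) 0)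

/-- `dsv π`: the sum of the depths of the symmetric valleys of `π`. -/
def dsvL (L : List ℕ) : ℕ := ∑ i ∈ symValleyIdx L, (L.getD i 0 - L.getD (i+1) 0)

/-- `dsv(n,k)`: the total sum of depths of symmetric valleys over all compositions of `n`
with exactly `k` parts. -/
def dsvNK (n k : ℕ) : ℕ :=
  ∑ c ∈ (Finset.univ : Finset (Composition n)).filter (fun c => c.length = k),
    dsvL c.blocks

/-- Variables: `X 0 = x`, `X 1 = y`. -/
noncomputable abbrev Xv : Fin 2 → MvPowerSeries (Fin 2) ℚ := MvPowerSeries.X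

/-- `Σ_{n,k≥0} dsv(n,k)·xⁿ·y^k ∈ ℚ[[x,y]]`. -/
def dsvSeries : MvPowerSeries (Fin 2) ℚ := fun m => (dsvNK (m 0) (m 1) : ℚ)

open Finset MvPowerSeries


noncomputable def fs2 (n k : ℕ) : Fin 2 →₀ ℕ := Finsupp.single 0 n + Finsupp.single 1 k

@[simp] lemma fs2_apply0 (n k : ℕ) : fs2 n k 0 = n := by simp [fs2]
@[simp] lemma fs2_apply1 (n k : ℕ) : fs2 n k 1 = k := by simp [fs2]

lemma eq_fs2 (m : Fin 2 →₀ ℕ) : m = fs2 (m 0) (m 1) := by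
  ext i; fin_cases i <;> simp [fs2]

lemma fs2_eq_iff {m : Fin 2 →₀ ℕ} {a b : ℕ} : m = fs2 a b ↔ m 0 = a ∧ m 1 = b := by
  constructor
  · rintro rfl; simp
  · rintro ⟨h0, h1⟩; rw [eq_fs2 m, h0, h1]

lemma fs2_le {a b : ℕ} {m : Fin 2 →₀ ℕ} : fs2 a b ≤ m ↔ a ≤ m 0 ∧ b ≤ m 1 := by
  constructor
  · intro h; exact ⟨by simpa using h 0, by simpa using h 1⟩
  · rintro ⟨h0, h1⟩ i; fin_cases i <;> simpa

lemma sub_fs2 (m : Fin 2 →₀ ℕ) (a b : ℕ) : m - fs2 a b = fs2 (m 0 - a) (m 1 - b) := by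
  ext i; fin_cases i <;> simp [Finsupp.tsub_apply]

lemma X0_pow_monomial (j : ℕ) : ((Xv 0)^j : MvPowerSeries (Fin 2) ℚ) = monomial (fs2 j 0) 1 := by
  show MvPowerSeries.X 0 ^ j = _
  rw [X_pow_eq]
  congr 1
  simp [fs2]

lemma X1X0_monomial : (Xv 1 * Xv 0 : MvPowerSeries (Fin 2) ℚ) = monomial (fs2 1 1) 1 := by
  show MvPowerSeries.X 1 * MvPowerSeries.X 0 = _
  rw [X_def, X_def, monomial_mul_monomial, one_mul]
  congr 1
  rw [fs2, add_comm]

lemma X03X13_monomial : ((Xv 0)^3 * (Xv 1)^3 : MvPowerSeries (Fin 2) ℚ)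
    = monomial (fs2 3 3) 1 := by
  show MvPowerSeries.X 0 ^ 3 * MvPowerSeries.X 1 ^ 3 = _
  rw [X_pow_eq, X_pow_eq, monomial_mul_monomial, one_mul]
  congr 1

lemma coeff_fs2_mul (a b : ℕ) (φ : MvPowerSeries (Fin 2) ℚ) (m : Fin 2 →₀ ℕ) :
    coeff m (monomial (fs2 a b) 1 * φ)
      = if a ≤ m 0 ∧ b ≤ m 1 then coeff (fs2 (m 0 - a) (m 1 - b)) φ else 0 := by
  rw [coeff_monomial_mul, sub_fs2]
  rcases iff_iff_and_or_not_and_not.mp (fs2_le (a := a) (b := b) (m := m)) with ⟨h1, h2⟩ | ⟨h1, h2⟩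
  · rw [if_pos h1, if_pos h2, one_mul]
  · rw [if_neg h1, if_neg h2]

lemma coeff_fs2_monomial (a b : ℕ) (m : Fin 2 →₀ ℕ) :
    coeff m (monomial (fs2 a b) (1:ℚ)) = if m 0 = a ∧ m 1 = b then 1 else 0 := by
  rw [coeff_monomial]
  congr 1
  rw [fs2_eq_iff]

lemma coeff_one' (m : Fin 2 →₀ ℕ) :
    coeff m (1 : MvPowerSeries (Fin 2) ℚ) = if m 0 = 0 ∧ m 1 = 0 then 1 else 0 := by
  rw [coeff_one]
  congr 1
  rw [show (0 : Fin 2 →₀ ℕ) = fs2 0 0 by simp [fs2], fs2_eq_iff]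

lemma coeff_X0 (m : Fin 2 →₀ ℕ) :
    coeff m (Xv 0) = if m 0 = 1 ∧ m 1 = 0 then 1 else 0 := by
  show coeff m (MvPowerSeries.X 0) = _
  rw [X_def, coeff_monomial, show (Finsupp.single 0 1 : Fin 2 →₀ ℕ) = fs2 1 0 by simp [fs2]]
  congr 1
  rw [fs2_eq_iff]


lemma fs2_add (a b c d : ℕ) : fs2 a b + fs2 c d = fs2 (a+c) (b+d) := by
  unfold fs2
  rw [Finsupp.single_add, Finsupp.single_add]
  abel

lemma coeff_mul_fin2 (φ ψ : MvPowerSeries (Fin 2) ℚ) (n k : ℕ) :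
    coeff (fs2 n k) (φ * ψ)
      = ∑ n1 ∈ Finset.range (n+1), ∑ k1 ∈ Finset.range (k+1),
          coeff (fs2 n1 k1) φ * coeff (fs2 (n-n1) (k-k1)) ψ := by
  rw [coeff_mul, ← Finset.sum_product']
  refine Finset.sum_nbij' (fun p => (p.1 0, p.1 1))
    (fun q => (fs2 q.1 q.2, fs2 (n - q.1) (k - q.2))) ?_ ?_ ?_ ?_ ?_
  · intro p hp
    rw [Finset.HasAntidiagonal.mem_antidiagonal] at hp
    have h0 : p.1 0 + p.2 0 = n := by
      have := congrArg (fun f => f 0) hp; simpa using this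
    have h1 : p.1 1 + p.2 1 = k := by
      have := congrArg (fun f => f 1) hp; simpa using this
    simp only [Finset.mem_product, Finset.mem_range]
    omega
  · intro q hq
    simp only [Finset.mem_product, Finset.mem_range] at hq
    rw [Finset.HasAntidiagonal.mem_antidiagonal, fs2_add]
    congr 1 <;> omega
  · intro p hp
    rw [Finset.HasAntidiagonal.mem_antidiagonal] at hp
    have h0 : p.1 0 + p.2 0 = n := by
      have := congrArg (fun f => f 0) hp; simpa using this
    have h1 : p.1 1 + p.2 1 = k := by
      have := congrArg (fun f => f 1) hp; simpa using this
    have e1 : p.1 = fs2 (p.1 0) (p.1 1) := eq_fs2 p.1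
    have e2 : p.2 = fs2 (n - p.1 0) (k - p.1 1) := by
      rw [eq_fs2 p.2]; congr 1 <;> omega
    ext <;> simp [← e1, ← e2]
  · intro q hq; simp
  · intro p hp
    rw [Finset.HasAntidiagonal.mem_antidiagonal] at hp
    have h0 : p.1 0 + p.2 0 = n := by
      have := congrArg (fun f => f 0) hp; simpa using this
    have h1 : p.1 1 + p.2 1 = k := by
      have := congrArg (fun f => f 1) hp; simpa using this
    have e2 : p.2 = fs2 (n - p.1 0) (k - p.1 1) := by
      rw [eq_fs2 p.2]; congr 1 <;> omega
    rw [← e2, ← eq_fs2]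

def comps : ℕ → ℕ → Finset (List ℕ)
  | n, 0 => if n = 0 then {[]} else ∅
  | n, k+1 => (Finset.range n).biUnion fun a => (comps (n - (a+1)) k).image (List.cons (a+1))

def cc (n k : ℕ) : ℕ := (comps n k).card

lemma mem_comps {n k : ℕ} {L : List ℕ} :
    L ∈ comps n k ↔ L.length = k ∧ L.sum = n ∧ ∀ x ∈ L, 0 < x := by
  induction k generalizing n L with
  | zero =>
    simp only [comps]
    split_ifs with h
    · subst h
      simp only [Finset.mem_singleton, List.length_eq_zero_iff]
      constructor
      · rintro rfl; simp
      · rintro ⟨rfl, -, -⟩; rfl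
    · simp only [Finset.notMem_empty, false_iff]
      rintro ⟨hl, hs, -⟩
      exact h (by rw [← hs, List.length_eq_zero_iff.mp hl]; simp)
  | succ k ih =>
    simp only [comps, Finset.mem_biUnion, Finset.mem_range, Finset.mem_image]
    constructor
    · rintro ⟨a, ha, M, hM, rfl⟩
      obtain ⟨h1, h2, h3⟩ := ih.mp hM
      refine ⟨by simp [h1], by simp [h2]; omega, ?_⟩
      intro x hx; rcases List.mem_cons.mp hx with rfl | hx
      · omega
      · exact h3 x hx
    · rintro ⟨h1, h2, h3⟩
      match L with
      | [] => simp at h1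
      | x :: M =>
        have hx : 0 < x := h3 x (by simp)
        refine ⟨x - 1, ?_, M, ih.mpr ⟨by simpa using h1, ?_, fun y hy => h3 y (by simp [hy])⟩, by
          congr; omega⟩
        · simp at h2
          have hM0 : 0 < M.length ∨ M = [] := by
            rcases M with _ | _ <;> simp
          -- need x - 1 < n i.e. x ≤ n; x ≤ x + M.sum = n
          omega
        · simp at h2; omega



lemma sum_comps_succ {M : Type*} [AddCommMonoid M] (f : List ℕ → M) (n k : ℕ) :
    ∑ L ∈ comps n (k+1), f L
      = ∑ a ∈ Finset.range n, ∑ L ∈ comps (n - (a+1)) k, f ((a+1) :: L) := by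
  rw [show comps n (k+1) = (Finset.range n).biUnion
      (fun a => (comps (n - (a+1)) k).image (List.cons (a+1))) from rfl]
  rw [Finset.sum_biUnion]
  · refine Finset.sum_congr rfl fun a _ => ?_
    rw [Finset.sum_image]
    intro x _ y _ h
    simpa using h
  · intro a _ b _ hab
    simp only [Function.onFun, Finset.disjoint_left]
    intro L hL hL'
    simp only [Finset.mem_image] at hL hL'
    obtain ⟨_, _, rfl⟩ := hL
    obtain ⟨_, _, h⟩ := hL'
    apply hab
    have := (List.cons.injEq _ _ _ _).mp h
    omega

lemma cc_zero (n : ℕ) : cc n 0 = if n = 0 then 1 else 0 := by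
  unfold cc comps; split_ifs <;> simp

lemma cc_succ (n k : ℕ) : cc n (k+1) = ∑ a ∈ Finset.range n, cc (n - (a+1)) k := by
  unfold cc
  rw [Finset.card_eq_sum_ones, sum_comps_succ (fun _ => (1:ℕ))]
  exact Finset.sum_congr rfl fun a _ => (Finset.card_eq_sum_ones _).symm

lemma cc_pascal (n k : ℕ) : cc (n+1) (k+1) = cc n k + cc n (k+1) := by
  rw [cc_succ, Finset.sum_range_succ', cc_succ]
  simp only [Nat.add_sub_cancel]
  rw [add_comm]
  congr 1
  simp


def wc (n : ℕ) : ℕ :=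
  ∑ a ∈ Finset.range (n+1), ∑ b ∈ Finset.range (n+1),
    if 2*a + b = n ∧ b < a ∧ 1 ≤ b then a - b else 0

def g2 (n : ℕ) : ℕ := if n % 2 = 0 then n / 2 else 0

lemma wc_single (n : ℕ) :
    wc n = ∑ a ∈ Finset.range (n+1), if 2*a < n ∧ n < 3*a then 3*a - n else 0 := by
  unfold wc
  refine Finset.sum_congr rfl fun a _ => ?_
  rcases le_or_gt (2*a) n with h | h
  · rcases Nat.lt_or_ge (2*a) n with h2 | h2
    · -- b pinned to n - 2*a
      rw [Finset.sum_eq_single (n - 2*a)]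
      · split_ifs with h3 h4 h4 <;> omega
      · intro b _ hb; rw [if_neg]; omega
      · intro hb; exfalso; apply hb; simp
    · -- 2*a = n, then b must be 0, fails 1 ≤ b
      rw [if_neg (by omega)]
      apply Finset.sum_eq_zero; intro b _; rw [if_neg]; omega
  · rw [if_neg (by omega)]
    apply Finset.sum_eq_zero; intro b _; rw [if_neg]; omega

lemma wc_rec (n : ℕ) : wc (n+3) = wc n + g2 n := by
  rw [wc_single, wc_single]
  rw [Finset.sum_range_succ']
  rw [if_neg (by omega)]
  -- now ∑ a in range (n+3), ite (2*(a+1) < n+3 ∧ n+3 < 3*(a+1)) (3*(a+1) - (n+3)) 0 + 0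
  rw [add_zero]
  have key : ∀ a : ℕ, (if 2*(a+1) < n+3 ∧ n+3 < 3*(a+1) then 3*(a+1) - (n+3) else 0)
      = (if 2*a < n ∧ n < 3*a then 3*a - n else 0) + (if 2*a = n ∧ 0 < n then n/2 else 0) := by
    intro a
    split_ifs <;> omega
  rw [Finset.sum_congr rfl fun a _ => key a, Finset.sum_add_distrib]
  congr 1
  · -- extend range (n+3) vs range (n+1): extra terms are zero
    rw [show n+3 = (n+1) + 2 by ring]
    rw [Finset.sum_range_succ, Finset.sum_range_succ, if_neg (by omega), if_neg (by omega)]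
    simp
  · -- collapses to g2 n
    unfold g2
    rcases Nat.even_or_odd n with ⟨m, hm⟩ | ⟨m, hm⟩
    · subst hm
      rw [Finset.sum_eq_single m]
      · split_ifs <;> omega
      · intro b _ hb; rw [if_neg]; omega
      · intro h; exfalso; apply h; simp; omega
    · subst hm
      rw [if_neg (by omega)]
      apply Finset.sum_eq_zero; intro b _; rw [if_neg]; omega

lemma cc_zero_left (k : ℕ) : cc 0 k = if k = 0 then 1 else 0 := by
  cases k with
  | zero => simp [cc_zero]
  | succ k => simp [cc_succ]

noncomputable def Cs : MvPowerSeries (Fin 2) ℚ := fun m => (cc (m 0) (m 1) : ℚ)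
noncomputable def Vs : MvPowerSeries (Fin 2) ℚ := fun m => if m 1 = 3 then (wc (m 0) : ℚ) else 0
noncomputable def G2s : MvPowerSeries (Fin 2) ℚ := fun m => if m 1 = 0 then (g2 (m 0) : ℚ) else 0
noncomputable def A2s : MvPowerSeries (Fin 2) ℚ :=
  fun m => if m 1 = 0 ∧ m 0 % 2 = 0 then 1 else 0

@[simp] lemma coeff_Cs (m : Fin 2 →₀ ℕ) : coeff m Cs = (cc (m 0) (m 1) : ℚ) := rfl
@[simp] lemma coeff_Vs (m : Fin 2 →₀ ℕ) :
    coeff m Vs = if m 1 = 3 then (wc (m 0) : ℚ) else 0 := rfl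
@[simp] lemma coeff_G2s (m : Fin 2 →₀ ℕ) :
    coeff m G2s = if m 1 = 0 then (g2 (m 0) : ℚ) else 0 := rfl
@[simp] lemma coeff_A2s (m : Fin 2 →₀ ℕ) :
    coeff m A2s = if m 1 = 0 ∧ m 0 % 2 = 0 then 1 else 0 := rfl

lemma LemA2 : (1 - (Xv 0)^2) * A2s = 1 := by
  ext m
  rw [sub_mul, one_mul, map_sub, X0_pow_monomial, coeff_fs2_mul, coeff_one']
  simp only [coeff_A2s, fs2_apply0, fs2_apply1]
  split_ifs <;> first | ring1 | (exfalso; omega)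

lemma LemG2 : (1 - (Xv 0)^2) * G2s = (Xv 0)^2 * A2s := by
  ext m
  rw [sub_mul, one_mul, map_sub, X0_pow_monomial, coeff_fs2_mul, coeff_fs2_mul]
  simp only [coeff_A2s, coeff_G2s, fs2_apply0, fs2_apply1, Nat.sub_zero, Nat.zero_le, and_true]
  by_cases hk : m 1 = 0
  · rw [if_pos hk]
    by_cases h2 : 2 ≤ m 0
    · rw [if_pos h2, if_pos h2, if_pos hk]
      by_cases he : m 0 % 2 = 0
      · rw [if_pos (by omega),
          show g2 (m 0) = g2 (m 0 - 2) + 1 by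
            simp only [g2, if_pos he, if_pos (show (m 0 - 2) % 2 = 0 by omega)]; omega]
        push_cast; ring
      · rw [if_neg (by omega), show g2 (m 0) = 0 by simp only [g2, if_neg he],
            show g2 (m 0 - 2) = 0 by
              simp only [g2, if_neg (show ¬ (m 0 - 2) % 2 = 0 by omega)]]
        norm_num
    · rw [if_neg h2, if_neg h2]
      have : m 0 = 0 ∨ m 0 = 1 := by omega
      rcases this with h | h <;> rw [h] <;> simp [g2]
  · rw [if_neg hk]
    by_cases h2 : 2 ≤ m 0
    · rw [if_pos h2, if_pos h2, if_neg hk, if_neg (by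
        intro h; exact hk h.1)]
      simp
    · rw [if_neg h2, if_neg h2]
      simp

lemma wc0 : wc 0 = 0 := by decide
lemma wc1 : wc 1 = 0 := by decide
lemma wc2 : wc 2 = 0 := by decide

lemma LemV : (1 - (Xv 0)^3) * Vs = (Xv 0)^3 * (Xv 1)^3 * G2s := by
  ext m
  rw [sub_mul, one_mul, map_sub, X03X13_monomial, X0_pow_monomial, coeff_fs2_mul,
    coeff_fs2_mul]
  simp only [coeff_Vs, coeff_G2s, fs2_apply0, fs2_apply1, Nat.sub_zero, Nat.zero_le, and_true]
  by_cases h3 : m 1 = 3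
  · rw [if_pos h3]
    by_cases hn : 3 ≤ m 0
    · rw [if_pos hn, if_pos h3, if_pos (show 3 ≤ m 0 ∧ 3 ≤ m 1 by omega),
        if_pos (show m 1 - 3 = 0 by omega)]
      rw [show m 0 = (m 0 - 3) + 3 by omega, wc_rec]
      push_cast
      ring_nf
    · rw [if_neg hn, if_neg (show ¬ (3 ≤ m 0 ∧ 3 ≤ m 1) by omega), sub_zero]
      interval_cases h : (m 0) <;>
        simp [h3, wc0, wc1, wc2]
  · rw [if_neg h3]
    split_ifs <;> first | ring1 | (exfalso; omega)

lemma LemC : (1 - Xv 0 - Xv 1 * Xv 0) * Cs = 1 - Xv 0 := by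
  ext m
  rw [sub_mul, sub_mul, one_mul, map_sub, map_sub, map_sub, X1X0_monomial, coeff_fs2_mul,
    show (Xv 0 : MvPowerSeries (Fin 2) ℚ) = (Xv 0)^1 by ring, X0_pow_monomial, coeff_fs2_mul,
    coeff_one']
  simp only [coeff_Cs, fs2_apply0, fs2_apply1, Nat.sub_zero, Nat.zero_le, and_true]
  rw [coeff_fs2_monomial]
  rcases Nat.eq_zero_or_pos (m 0) with h0 | h0
  · rw [h0, cc_zero_left]
    split_ifs <;> first | ring1 | (exfalso; omega) | simp_all
  · rcases Nat.eq_zero_or_pos (m 1) with h1 | h1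
    · rw [h1]
      rw [if_pos (by omega), if_neg (by omega)]
      rw [cc_zero, if_neg (by omega : ¬ m 0 = 0)]
      rcases Nat.lt_or_ge (m 0) 2 with h2 | h2
      · rw [show m 0 = 1 by omega]
        norm_num [cc_zero]
      · rw [cc_zero, if_neg (by omega : ¬ m 0 - 1 = 0)]
        split_ifs <;> first | ring1 | (exfalso; omega)
    · rw [if_pos (by omega), if_pos (by omega), if_neg (by omega), if_neg (by omega)]
      rw [show cc (m 0) (m 1) = cc (m 0 - 1) (m 1 - 1) + cc (m 0 - 1) (m 1) by
        rw [show m 0 = (m 0 - 1) + 1 by omega, show m 1 = (m 1 - 1) + 1 by omega] at *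
        simp only [Nat.add_sub_cancel]
        exact cc_pascal _ _]
      push_cast
      ring

def gval (M : List ℕ) : ℕ :=
  if 3 ≤ M.length ∧ M.getD 1 0 < M.getD 0 0 ∧ M.getD 0 0 = M.getD 2 0
  then M.getD 0 0 - M.getD 1 0 else 0

lemma gval_drop (L : List ℕ) (i : ℕ) :
    gval (L.drop i) = if i+2 < L.length ∧ L.getD (i+1) 0 < L.getD i 0 ∧
        L.getD i 0 = L.getD (i+2) 0 then L.getD i 0 - L.getD (i+1) 0 else 0 := by
  have hd : ∀ j, (L.drop i).getD j 0 = L.getD (i+j) 0 := fun j => by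
    simp [List.getD_eq_getElem?_getD, List.getElem?_drop]
  unfold gval
  rw [hd 0, hd 1, hd 2, List.length_drop, add_zero]
  exact if_congr (by constructor <;> (rintro ⟨h1, h2⟩; exact ⟨by omega, h2⟩)) rfl rfl

lemma dsvL_eq (L : List ℕ) : dsvL L = ∑ i ∈ Finset.range L.length, gval (L.drop i) := by
  unfold dsvL symValleyIdx
  rw [Finset.sum_filter]
  exact Finset.sum_congr rfl fun i _ => (gval_drop L i).symm

lemma dsvNK_eq (n k : ℕ) : dsvNK n k = ∑ L ∈ comps n k, dsvL L := by
  unfold dsvNK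
  apply Finset.sum_bij (i := fun c _ => c.blocks)
  · intro c hc
    rw [Finset.mem_filter] at hc
    exact mem_comps.mpr ⟨hc.2, c.blocks_sum, fun x hx => c.blocks_pos hx⟩
  · intro c _ c' _ h
    exact Composition.ext h
  · intro L hL
    obtain ⟨h1, h2, h3⟩ := mem_comps.mp hL
    exact ⟨⟨L, fun hx => h3 _ hx, h2⟩, Finset.mem_filter.mpr ⟨Finset.mem_univ _, h1⟩, rfl⟩
  · intro c _; rfl

lemma split_sum (g : List ℕ → ℕ) :
    ∀ (i k n : ℕ), i ≤ k →
    ∑ L ∈ comps n k, g (L.drop i)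
      = ∑ n1 ∈ Finset.range (n+1), cc n1 i * ∑ M ∈ comps (n - n1) (k - i), g M := by
  intro i
  induction i with
  | zero =>
    intro k n _
    symm
    rw [Finset.sum_eq_single 0]
    · simp [cc_zero, List.drop_zero]
    · intro n1 _ hn1
      rw [cc_zero, if_neg hn1, zero_mul]
    · intro h; exact absurd (Finset.mem_range.mpr (by omega)) h
  | succ i ih =>
    intro k n hik
    match k with
    | k'+1 =>
      have hik' : i ≤ k' := by omega
      have hk : k' + 1 - (i + 1) = k' - i := by omega
      rw [hk]
      calc ∑ L ∈ comps n (k'+1), g (L.drop (i+1))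
          = ∑ a ∈ Finset.range n, ∑ n1 ∈ Finset.range (n - (a+1) + 1),
              cc n1 i * ∑ M ∈ comps (n - (a+1) - n1) (k' - i), g M := by
            rw [sum_comps_succ (fun L => g (L.drop (i+1)))]
            simp only [List.drop_succ_cons]
            exact Finset.sum_congr rfl fun a _ => ih k' (n - (a+1)) hik'
        _ = ∑ n1' ∈ Finset.range (n+1), ∑ a ∈ Finset.range n1',
              cc (n1' - (a+1)) i * ∑ M ∈ comps (n - n1') (k' - i), g M := by
            rw [Finset.sum_sigma', Finset.sum_sigma']
            refine Finset.sum_nbij' (fun p => ⟨p.1 + 1 + p.2, p.1⟩)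
              (fun q => ⟨q.2, q.1 - (q.2 + 1)⟩) ?_ ?_ ?_ ?_ ?_
            · rintro ⟨a, n1⟩ hp
              simp only [Finset.mem_sigma, Finset.mem_range] at hp ⊢
              omega
            · rintro ⟨n1', a⟩ hq
              simp only [Finset.mem_sigma, Finset.mem_range] at hq ⊢
              omega
            · rintro ⟨a, n1⟩ hp
              simp only [Finset.mem_sigma, Finset.mem_range] at hp
              simp only [Sigma.mk.inj_iff, heq_eq_eq]
              constructor <;> first | trivial | omega
            · rintro ⟨n1', a⟩ hq
              simp only [Finset.mem_sigma, Finset.mem_range] at hq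
              simp only [Sigma.mk.inj_iff, heq_eq_eq]
              constructor <;> first | trivial | omega
            · rintro ⟨a, n1⟩ hp
              simp only [Finset.mem_sigma, Finset.mem_range] at hp
              have h1 : a + 1 + n1 - (a + 1) = n1 := by omega
              have h2 : n - (a + 1 + n1) = n - (a+1) - n1 := by omega
              rw [h1, h2]
        _ = ∑ n1 ∈ Finset.range (n+1), cc n1 (i+1) * ∑ M ∈ comps (n - n1) (k' - i), g M := by
            refine Finset.sum_congr rfl fun n1 _ => ?_
            rw [cc_succ, Finset.sum_mul]

lemma gval_cons3 (x y z : ℕ) (T : List ℕ) :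
    gval (x::y::z::T) = if y < x ∧ x = z then x - y else 0 := by
  unfold gval
  have h3 : (3:ℕ) ≤ (x::y::z::T).length := by simp
  simp only [List.getD_cons_zero, List.getD_cons_succ, h3, true_and]

lemma gsum_short (m j : ℕ) (hj : j < 3) : ∑ M ∈ comps m j, gval M = 0 := by
  apply Finset.sum_eq_zero
  intro M hM
  obtain ⟨hlen, -, -⟩ := mem_comps.mp hM
  unfold gval
  rw [if_neg]
  rintro ⟨h, -⟩
  omega

def Sform (m j : ℕ) : ℕ :=
  ∑ a ∈ Finset.range (m+1), ∑ b ∈ Finset.range (m+1),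
    if b < a ∧ 2*a+b+3 ≤ m then (a - b) * cc (m - (2*a+b+3)) j else 0

lemma gsum_peel (m j : ℕ) :
    ∑ M ∈ comps m (j+3), gval M = Sform m j := by
  have hterm : ∀ a b c m', ∑ M3 ∈ comps (m'-(c+1)) j, gval ((a+1)::(b+1)::(c+1)::M3)
      = if b < a ∧ c = a then (a-b) * cc (m'-(c+1)) j else 0 := by
    intro a b c m'
    rw [Finset.sum_congr rfl (fun M3 _ => gval_cons3 (a+1) (b+1) (c+1) M3)]
    rw [Finset.sum_const, smul_eq_mul]
    show (cc (m'-(c+1)) j) * _ = _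
    split_ifs with h1 h2 h2
    · rw [mul_comm]; congr 1; omega
    · exfalso; omega
    · exfalso; omega
    · rw [mul_zero]
  have inner : ∀ a b m', (∑ c ∈ Finset.range (m'), ∑ M3 ∈ comps (m' - (c+1)) j,
        gval ((a+1)::(b+1)::(c+1)::M3))
      = if b < a ∧ a < m' then (a - b) * cc (m' - (a+1)) j else 0 := by
    intro a b m'
    rw [Finset.sum_congr rfl (fun c _ => hterm a b c m')]
    by_cases ha : a < m'
    · rw [Finset.sum_eq_single a]
      · split_ifs with h1 h2 h2 <;> first | rfl | (exfalso; omega)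
      · intro c _ hc; rw [if_neg (by omega)]
      · intro h; exact absurd (Finset.mem_range.mpr ha) h
    · rw [if_neg (by omega)]
      apply Finset.sum_eq_zero
      intro c hc
      rw [Finset.mem_range] at hc
      rw [if_neg (by omega)]
  calc ∑ M ∈ comps m (j+3), gval M
      = ∑ a ∈ Finset.range m, ∑ M1 ∈ comps (m-(a+1)) (j+2), gval ((a+1)::M1) :=
        sum_comps_succ gval m (j+2)
    _ = ∑ a ∈ Finset.range m, ∑ b ∈ Finset.range (m-(a+1)),
          ∑ M2 ∈ comps (m-(a+1)-(b+1)) (j+1), gval ((a+1)::(b+1)::M2) :=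
        Finset.sum_congr rfl fun a _ => sum_comps_succ _ _ _
    _ = ∑ a ∈ Finset.range m, ∑ b ∈ Finset.range (m-(a+1)),
          ∑ c ∈ Finset.range (m-(a+1)-(b+1)), ∑ M3 ∈ comps (m-(a+1)-(b+1)-(c+1)) j,
            gval ((a+1)::(b+1)::(c+1)::M3) :=
        Finset.sum_congr rfl fun a _ => Finset.sum_congr rfl fun b _ => sum_comps_succ _ _ _
    _ = ∑ a ∈ Finset.range m, ∑ b ∈ Finset.range (m-(a+1)),
          if b < a ∧ a < m-(a+1)-(b+1) then (a - b) * cc (m-(a+1)-(b+1) - (a+1)) j else 0 :=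
        Finset.sum_congr rfl fun a _ => Finset.sum_congr rfl fun b _ => inner a b _
    _ = ∑ a ∈ Finset.range (m+1), ∑ b ∈ Finset.range (m+1),
          if b < a ∧ 2*a+b+3 ≤ m then (a - b) * cc (m - (2*a+b+3)) j else 0 := by
        rw [Finset.sum_subset (Finset.range_subset_range.mpr (by omega : m ≤ m+1))]
        · refine Finset.sum_congr rfl fun a ha => ?_
          rw [Finset.sum_subset (Finset.range_subset_range.mpr
            (by omega : m-(a+1) ≤ m+1))]
          · refine Finset.sum_congr rfl fun b hb => ?_
            by_cases h : b < a ∧ 2*a+b+3 ≤ m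
            · rw [if_pos (by omega), if_pos h]
              congr 2
              omega
            · rw [if_neg (by omega), if_neg h]
          · intro b _ hb
            rw [Finset.mem_range] at hb
            rw [if_neg (by omega)]
        · intro a _ ha
          rw [Finset.mem_range] at ha
          apply Finset.sum_eq_zero
          intro b _
          rw [if_neg (by omega)]

lemma wc_conv (m j : ℕ) :
    ∑ m2 ∈ Finset.range (m+1), wc m2 * cc (m - m2) j = Sform m j := by
  calc ∑ m2 ∈ Finset.range (m+1), wc m2 * cc (m - m2) j
      = ∑ m2 ∈ Finset.range (m+1), ∑ a ∈ Finset.range (m+1), ∑ b ∈ Finset.range (m+1),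
          (if 2*a+b = m2 ∧ b < a ∧ 1 ≤ b then (a-b) * cc (m-m2) j else 0) := by
        refine Finset.sum_congr rfl fun m2 hm2 => ?_
        rw [Finset.mem_range] at hm2
        rw [wc, Finset.sum_mul]
        rw [Finset.sum_subset (Finset.range_subset_range.mpr (by omega : m2+1 ≤ m+1))]
        · refine Finset.sum_congr rfl fun a _ => ?_
          rw [Finset.sum_mul]
          rw [Finset.sum_subset (Finset.range_subset_range.mpr (by omega : m2+1 ≤ m+1))]
          · refine Finset.sum_congr rfl fun b _ => ?_
            rw [ite_mul, zero_mul]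
          · intro b _ hb
            rw [Finset.mem_range] at hb
            rw [if_neg (by omega), zero_mul]
        · intro a _ ha
          rw [Finset.mem_range] at ha
          have hz : (∑ b ∈ Finset.range (m2+1),
              if 2*a+b = m2 ∧ b < a ∧ 1 ≤ b then a-b else 0) = 0 :=
            Finset.sum_eq_zero fun b _ => by rw [if_neg (by omega)]
          rw [hz, zero_mul]
    _ = ∑ a ∈ Finset.range (m+1), ∑ b ∈ Finset.range (m+1), ∑ m2 ∈ Finset.range (m+1),
          (if 2*a+b = m2 ∧ b < a ∧ 1 ≤ b then (a-b) * cc (m-m2) j else 0) := by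
        rw [Finset.sum_comm]
        exact Finset.sum_congr rfl fun a _ => Finset.sum_comm
    _ = ∑ a ∈ Finset.range (m+1), ∑ b ∈ Finset.range (m+1),
          (if 2*a+b ≤ m ∧ b < a ∧ 1 ≤ b then (a-b) * cc (m-(2*a+b)) j else 0) := by
        refine Finset.sum_congr rfl fun a _ => Finset.sum_congr rfl fun b _ => ?_
        by_cases h : 2*a+b ≤ m
        · rw [Finset.sum_eq_single (2*a+b)]
          · split_ifs <;> first | rfl | (exfalso; omega)
          · intro m2 _ hm2; rw [if_neg (by omega)]
          · intro hc; exact absurd (Finset.mem_range.mpr (by omega)) hc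
        · rw [if_neg (by omega)]
          apply Finset.sum_eq_zero
          intro m2 hm2
          rw [Finset.mem_range] at hm2
          rw [if_neg (by omega)]
    _ = Sform m j := by
        have hS : Sform m j = ∑ a ∈ Finset.range m, ∑ b ∈ Finset.range m,
            (if b < a ∧ 2*a+b+3 ≤ m then (a - b) * cc (m - (2*a+b+3)) j else 0) := by
          rw [Sform]
          rw [← Finset.sum_subset (Finset.range_subset_range.mpr (by omega : m ≤ m+1))
            (fun a _ ha => Finset.sum_eq_zero fun b _ => by
              rw [Finset.mem_range] at ha
              rw [if_neg (by omega)])]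
          refine Finset.sum_congr rfl fun a ha => ?_
          rw [Finset.mem_range] at ha
          rw [← Finset.sum_subset (Finset.range_subset_range.mpr (by omega : m ≤ m+1))
            (fun b _ hb => by
              rw [Finset.mem_range] at hb
              rw [if_neg (by omega)])]
        rw [hS]
        rw [Finset.sum_range_succ' (fun a => ∑ b ∈ Finset.range (m+1),
          if 2*a+b ≤ m ∧ b < a ∧ 1 ≤ b then (a-b) * cc (m-(2*a+b)) j else 0)]
        have hz1 : (∑ b ∈ Finset.range (m+1),
            if 2*0+b ≤ m ∧ b < 0 ∧ 1 ≤ b then (0-b) * cc (m-(2*0+b)) j else 0) = 0 :=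
          Finset.sum_eq_zero fun b _ => by rw [if_neg (by omega)]
        rw [hz1, add_zero]
        refine Finset.sum_congr rfl fun a _ => ?_
        rw [Finset.sum_range_succ' (fun b =>
          if 2*(a+1)+b ≤ m ∧ b < a+1 ∧ 1 ≤ b then (a+1-b) * cc (m-(2*(a+1)+b)) j else 0)]
        rw [if_neg (by omega), add_zero]
        refine Finset.sum_congr rfl fun b _ => ?_
        by_cases h : b < a ∧ 2*a+b+3 ≤ m
        · rw [if_pos (by omega : 2*(a+1)+(b+1) ≤ m ∧ b+1 < a+1 ∧ 1 ≤ b+1), if_pos h,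
            show a+1-(b+1) = a-b by omega, show m-(2*(a+1)+(b+1)) = m-(2*a+b+3) by omega]
        · rw [if_neg (by omega), if_neg h]

lemma dsvNK_formula (n k : ℕ) :
    dsvNK n k = ∑ i ∈ Finset.range (k+1), ∑ n1 ∈ Finset.range (n+1),
      cc n1 i * (if 3 ≤ k - i then
        ∑ m2 ∈ Finset.range (n-n1+1), wc m2 * cc (n-n1-m2) (k-i-3) else 0) := by
  calc dsvNK n k
      = ∑ L ∈ comps n k, ∑ i ∈ Finset.range k, gval (L.drop i) := by
        rw [dsvNK_eq]
        refine Finset.sum_congr rfl fun L hL => ?_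
        rw [dsvL_eq, (mem_comps.mp hL).1]
    _ = ∑ i ∈ Finset.range k, ∑ L ∈ comps n k, gval (L.drop i) := Finset.sum_comm
    _ = ∑ i ∈ Finset.range k, ∑ n1 ∈ Finset.range (n+1),
          cc n1 i * ∑ M ∈ comps (n-n1) (k-i), gval M := by
        refine Finset.sum_congr rfl fun i hi => ?_
        rw [Finset.mem_range] at hi
        exact split_sum gval i k n (by omega)
    _ = ∑ i ∈ Finset.range k, ∑ n1 ∈ Finset.range (n+1),
          cc n1 i * (if 3 ≤ k - i then
            ∑ m2 ∈ Finset.range (n-n1+1), wc m2 * cc (n-n1-m2) (k-i-3) else 0) := by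
        refine Finset.sum_congr rfl fun i hi => Finset.sum_congr rfl fun n1 _ => ?_
        congr 1
        by_cases h : 3 ≤ k - i
        · rw [if_pos h]
          have hp := gsum_peel (n-n1) (k-i-3)
          rw [show (k-i-3)+3 = k-i by omega] at hp
          rw [hp, ← wc_conv]
        · rw [if_neg h, gsum_short _ _ (by omega)]
    _ = ∑ i ∈ Finset.range (k+1), ∑ n1 ∈ Finset.range (n+1),
          cc n1 i * (if 3 ≤ k - i then
            ∑ m2 ∈ Finset.range (n-n1+1), wc m2 * cc (n-n1-m2) (k-i-3) else 0) := by
        rw [Finset.sum_range_succ]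
        simp [Nat.sub_self]

lemma coeff_VsCs (m' j' : ℕ) :
    coeff (fs2 m' j') (Vs * Cs)
      = if 3 ≤ j' then ∑ n3 ∈ Finset.range (m'+1),
          (wc n3 : ℚ) * (cc (m'-n3) (j'-3) : ℚ) else 0 := by
  rw [coeff_mul_fin2]
  simp only [coeff_Cs, coeff_Vs, fs2_apply0, fs2_apply1]
  by_cases h : 3 ≤ j'
  · rw [if_pos h]
    refine Finset.sum_congr rfl fun n3 _ => ?_
    rw [Finset.sum_eq_single 3]
    · rw [if_pos rfl]
    · intro k3 _ hk3; rw [if_neg hk3, zero_mul]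
    · intro hc; exact absurd (Finset.mem_range.mpr (by omega)) hc
  · rw [if_neg h]
    apply Finset.sum_eq_zero
    intro n3 _
    apply Finset.sum_eq_zero
    intro k3 hk3
    rw [Finset.mem_range] at hk3
    rw [if_neg (by omega), zero_mul]

lemma dsvSeries_eq : (fun m => (dsvNK (m 0) (m 1) : ℚ) : MvPowerSeries (Fin 2) ℚ)
    = Cs * (Vs * Cs) := by
  ext m
  show (dsvNK (m 0) (m 1) : ℚ) = coeff m (Cs * (Vs * Cs))
  rw [show m = fs2 (m 0) (m 1) from eq_fs2 m, coeff_mul_fin2]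
  simp only [fs2_apply0, fs2_apply1, coeff_Cs, coeff_VsCs]
  rw [dsvNK_formula]
  rw [Finset.sum_comm]
  push_cast
  rfl

/-- `(1−x³)·(1−x²)²·(1−x−yx)²·(Σ_{n,k≥0} dsv(n,k)·xⁿ·y^k) = x⁵·y³·(1−x)²` in `ℚ[[x,y]]`. -/
theorem dsvNK_generating_function :
    (1 - (Xv 0)^3) * (1 - (Xv 0)^2)^2 * (1 - Xv 0 - Xv 1 * Xv 0)^2 * dsvSeries
    = (Xv 0)^5 * (Xv 1)^3 * (1 - Xv 0)^2 := by
  have hd : dsvSeries = Cs * (Vs * Cs) := dsvSeries_eq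
  rw [hd]
  calc (1 - (Xv 0)^3) * (1 - (Xv 0)^2)^2 * (1 - Xv 0 - Xv 1 * Xv 0)^2 * (Cs * (Vs * Cs))
      = ((1 - Xv 0 - Xv 1 * Xv 0) * Cs) * ((1 - Xv 0 - Xv 1 * Xv 0) * Cs)
        * ((1 - (Xv 0)^2) * ((1 - (Xv 0)^2) * ((1 - (Xv 0)^3) * Vs))) := by ring
    _ = (1 - Xv 0) * (1 - Xv 0)
        * ((1 - (Xv 0)^2) * ((1 - (Xv 0)^2) * ((Xv 0)^3 * (Xv 1)^3 * G2s))) := by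
        rw [LemC, LemV]
    _ = (1 - Xv 0) * (1 - Xv 0)
        * ((Xv 0)^3 * (Xv 1)^3 * ((1 - (Xv 0)^2) * ((1 - (Xv 0)^2) * G2s))) := by ring
    _ = (1 - Xv 0) * (1 - Xv 0)
        * ((Xv 0)^3 * (Xv 1)^3 * ((1 - (Xv 0)^2) * ((Xv 0)^2 * A2s))) := by rw [LemG2]
    _ = (1 - Xv 0) * (1 - Xv 0)
        * ((Xv 0)^3 * (Xv 1)^3 * ((Xv 0)^2 * ((1 - (Xv 0)^2) * A2s))) := by ring
    _ = (1 - Xv 0) * (1 - Xv 0) * ((Xv 0)^3 * (Xv 1)^3 * ((Xv 0)^2 * 1)) := by rw [LemA2]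
    _ = (Xv 0)^5 * (Xv 1)^3 * (1 - Xv 0)^2 := by ring
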